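/- For n ≥ 7, the alternating group A_n is a product of 9 conjugates of the pointwise stabilizer of {n-1, n} (a subgroup isomorphic to A_{n-2}). -/

import Mathlib

open scoped Pointwise

/-- A conjugate `g⁻¹ A g` of a subset `A`. -/
def conjSet {G : Type*} [Group G] (g : G) (A : Set G) : Set G :=
  (fun a => g⁻¹ * a * g) '' A

theorem Equiv.Perm.inv_apply_self {α : Type*} (f : Equiv.Perm α) (x : α) : f⁻¹ (f x) = x :=
  Equiv.Perm.inv_eq_iff_eq.mpr rfl

section AuxAlternating

variable {n : ℕ}

/-- In `Fin n` with `n ≥ 7` there is a point distinct from any four given points. -/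
private lemma exists_fresh (hn : 7 ≤ n) (a b c d : Fin n) :
    ∃ z : Fin n, z ≠ a ∧ z ≠ b ∧ z ≠ c ∧ z ≠ d := by
  by_contra h
  push_neg at h
  have hsub : (Finset.univ : Finset (Fin n)) ⊆ {a, b, c, d} := by
    intro z _
    by_cases h1 : z = a; · simp [h1]
    by_cases h2 : z = b; · simp [h2]
    by_cases h3 : z = c; · simp [h3]
    have := h z h1 h2 h3
    simp [this]
  have hcard := Finset.card_le_card hsub
  have h1 := Finset.card_insert_le a ({b, c, d} : Finset (Fin n))
  have h2 := Finset.card_insert_le b ({c, d} : Finset (Fin n))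
  have h3 := Finset.card_insert_le c ({d} : Finset (Fin n))
  simp [Finset.card_univ] at hcard h1 h2 h3
  omega

private lemma even_swap_mul (x y z : Fin n) (hxy : x ≠ y) (hyz : y ≠ z) :
    Equiv.swap x y * Equiv.swap y z ∈ alternatingGroup (Fin n) := by
  simp [Equiv.Perm.mem_alternatingGroup, Equiv.Perm.sign_swap, hxy, hyz]

/-- An even permutation fixing two given points and sending `x` to `y`. -/
private lemma exists_fix2_map (hn : 7 ≤ n) (a c x y : Fin n) (hxa : x ≠ a) (hxc : x ≠ c)
    (hya : y ≠ a) (hyc : y ≠ c) :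
    ∃ g : Equiv.Perm (Fin n),
      g ∈ alternatingGroup (Fin n) ∧ g a = a ∧ g c = c ∧ g x = y := by
  by_cases hxy : x = y
  · exact ⟨1, one_mem _, by simp, by simp, by simp [hxy]⟩
  · obtain ⟨z, hza, hzc, hzx, hzy⟩ := exists_fresh hn a c x y
    refine ⟨Equiv.swap x y * Equiv.swap y z,
      even_swap_mul x y z hxy (Ne.symm hzy), ?_, ?_, ?_⟩
    · simp [Equiv.Perm.mul_apply,
        Equiv.swap_apply_of_ne_of_ne (Ne.symm hya) (Ne.symm hza),
        Equiv.swap_apply_of_ne_of_ne (Ne.symm hxa) (Ne.symm hya)]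
    · simp [Equiv.Perm.mul_apply,
        Equiv.swap_apply_of_ne_of_ne (Ne.symm hyc) (Ne.symm hzc),
        Equiv.swap_apply_of_ne_of_ne (Ne.symm hxc) (Ne.symm hyc)]
    · simp [Equiv.Perm.mul_apply,
        Equiv.swap_apply_of_ne_of_ne hxy (Ne.symm hzx)]

/-- 2-transitivity of the alternating group for `n ≥ 7`. -/
private lemma exists_map2 (hn : 7 ≤ n) (x y p q : Fin n) (hxy : x ≠ y) (hpq : p ≠ q) :
    ∃ g : Equiv.Perm (Fin n), g ∈ alternatingGroup (Fin n) ∧ g x = p ∧ g y = q := by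
  obtain ⟨g₁, hg₁, hg₁x⟩ : ∃ g : Equiv.Perm (Fin n),
      g ∈ alternatingGroup (Fin n) ∧ g x = p := by
    by_cases hxp : x = p
    · exact ⟨1, one_mem _, by simp [hxp]⟩
    · obtain ⟨z, hzx, hzp, -, -⟩ := exists_fresh hn x p x p
      refine ⟨Equiv.swap x p * Equiv.swap p z, even_swap_mul x p z hxp (Ne.symm hzp), ?_⟩
      simp [Equiv.Perm.mul_apply,
        Equiv.swap_apply_of_ne_of_ne hxp (Ne.symm hzx)]
  have hy₁p : g₁ y ≠ p := by
    rw [← hg₁x]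
    exact fun h => hxy (g₁.injective h).symm
  obtain ⟨c₀, hc₀p, hc₀y₁, hc₀q, -⟩ := exists_fresh hn p (g₁ y) q q
  obtain ⟨g₂, hg₂, hg₂p, -, hg₂y₁⟩ :=
    exists_fix2_map hn p c₀ (g₁ y) q hy₁p (Ne.symm hc₀y₁) (Ne.symm hpq) (Ne.symm hc₀q)
  exact ⟨g₂ * g₁, mul_mem hg₂ hg₁,
    by simp [Equiv.Perm.mul_apply, hg₁x, hg₂p],
    by simp [Equiv.Perm.mul_apply, hg₂y₁]⟩

/-- The pointwise stabilizer of two points, as a subset of the alternating group. -/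
private def Hs (n : ℕ) (a c : Fin n) : Set (alternatingGroup (Fin n)) :=
  {σ : alternatingGroup (Fin n) |
    (σ : Equiv.Perm (Fin n)) a = a ∧ (σ : Equiv.Perm (Fin n)) c = c}

/-- The stabilizer of one point, as a subset of the alternating group. -/
private def Ts (n : ℕ) (a : Fin n) : Set (alternatingGroup (Fin n)) :=
  {σ : alternatingGroup (Fin n) | (σ : Equiv.Perm (Fin n)) a = a}

/-- Every element fixing `a` is a product of three pair-stabilizer elements. -/
private lemma triple_mem (hn : 7 ≤ n) (a c d : Fin n) (had : a ≠ d) (hcd : c ≠ d)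
    (σ : alternatingGroup (Fin n)) (hσ : (σ : Equiv.Perm (Fin n)) a = a) :
    σ ∈ Hs n a c * Hs n a d * Hs n a c := by
  set s : Equiv.Perm (Fin n) := (σ : Equiv.Perm (Fin n)) with hs
  obtain ⟨x, hxa, hxc, hxinv, -⟩ := exists_fresh hn a c (s⁻¹ c) (s⁻¹ c)
  have hsxa : s x ≠ a := by
    intro h
    exact hxa (s.injective (by rw [h, hσ]))
  have hsxc : s x ≠ c := by
    intro h
    apply hxinv
    rw [← h, Equiv.Perm.inv_apply_self]
  obtain ⟨γ, hγmem, hγa, hγc, hγx⟩ :=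
    exists_fix2_map hn a c x d hxa hxc (Ne.symm had) (Ne.symm hcd)
  obtain ⟨α, hαmem, hαa, hαc, hαd⟩ :=
    exists_fix2_map hn a c d (s x) (Ne.symm had) (Ne.symm hcd) hsxa hsxc
  set αs : alternatingGroup (Fin n) := ⟨α, hαmem⟩ with hαs
  set γs : alternatingGroup (Fin n) := ⟨γ, hγmem⟩ with hγs
  set βs : alternatingGroup (Fin n) := αs⁻¹ * σ * γs⁻¹ with hβs
  have hginva : γ⁻¹ a = a := by rw [← hγa, Equiv.Perm.inv_apply_self, hγa]
  have hginvd : γ⁻¹ d = x := by rw [← hγx, Equiv.Perm.inv_apply_self]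
  have hβval : (βs : Equiv.Perm (Fin n)) = α⁻¹ * s * γ⁻¹ := by
    simp [hβs, hαs, hγs, hs]
  have hβmem : βs ∈ Hs n a d := by
    constructor
    · rw [hβval]
      simp only [Equiv.Perm.mul_apply, hginva, hσ]
      rw [← hαa, Equiv.Perm.inv_apply_self, hαa]
    · rw [hβval]
      simp only [Equiv.Perm.mul_apply, hginvd]
      rw [← hαd, Equiv.Perm.inv_apply_self]
  have hfac : σ = αs * βs * γs := by rw [hβs]; group
  rw [hfac]
  exact Set.mul_mem_mul (Set.mul_mem_mul ⟨hαa, hαc⟩ hβmem) ⟨hγa, hγc⟩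

/-- Every element of the alternating group is a product of three point-stabilizer
elements (stabilizing `a`, `b`, `a` respectively). -/
private lemma top_mem (hn : 7 ≤ n) (a b : Fin n) (hab : a ≠ b)
    (σ : alternatingGroup (Fin n)) :
    σ ∈ Ts n a * Ts n b * Ts n a := by
  set s : Equiv.Perm (Fin n) := (σ : Equiv.Perm (Fin n)) with hs
  obtain ⟨x, hxa, hxinv, -, -⟩ := exists_fresh hn a (s⁻¹ a) a a
  have hsxa : s x ≠ a := by
    intro h
    apply hxinv
    rw [← h, Equiv.Perm.inv_apply_self]
  obtain ⟨c₀, hc₀a, hc₀x, hc₀b, -⟩ := exists_fresh hn a x b b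
  obtain ⟨γ, hγmem, hγa, -, hγx⟩ :=
    exists_fix2_map hn a c₀ x b hxa (Ne.symm hc₀x) (Ne.symm hab) (Ne.symm hc₀b)
  obtain ⟨c₁, hc₁a, hc₁b, hc₁sx, -⟩ := exists_fresh hn a b (s x) (s x)
  obtain ⟨α, hαmem, hαa, -, hαb⟩ :=
    exists_fix2_map hn a c₁ b (s x) (Ne.symm hab) (Ne.symm hc₁b) hsxa (Ne.symm hc₁sx)
  set αs : alternatingGroup (Fin n) := ⟨α, hαmem⟩ with hαs
  set γs : alternatingGroup (Fin n) := ⟨γ, hγmem⟩ with hγs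
  set βs : alternatingGroup (Fin n) := αs⁻¹ * σ * γs⁻¹ with hβs
  have hginvb : γ⁻¹ b = x := by rw [← hγx, Equiv.Perm.inv_apply_self]
  have hβval : (βs : Equiv.Perm (Fin n)) = α⁻¹ * s * γ⁻¹ := by
    simp [hβs, hαs, hγs, hs]
  have hβmem : βs ∈ Ts n b := by
    show (βs : Equiv.Perm (Fin n)) b = b
    rw [hβval]
    simp only [Equiv.Perm.mul_apply, hginvb]
    rw [← hαb, Equiv.Perm.inv_apply_self]
  have hfac : σ = αs * βs * γs := by rw [hβs]; group
  rw [hfac]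
  exact Set.mul_mem_mul (Set.mul_mem_mul hαa hβmem) hγa

/-- A conjugate of the pointwise stabilizer of `{p, q}` is the pointwise
stabilizer of the preimage pair. -/
private lemma conj_eq (p q x y : Fin n) (g : alternatingGroup (Fin n))
    (hgx : (g : Equiv.Perm (Fin n)) x = p) (hgy : (g : Equiv.Perm (Fin n)) y = q) :
    conjSet g {σ : alternatingGroup (Fin n) |
      (σ : Equiv.Perm (Fin n)) p = p ∧ (σ : Equiv.Perm (Fin n)) q = q} = Hs n x y := by
  set gv : Equiv.Perm (Fin n) := (g : Equiv.Perm (Fin n)) with hgv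
  have hinvp : gv⁻¹ p = x := by rw [← hgx, Equiv.Perm.inv_apply_self]
  have hinvq : gv⁻¹ q = y := by rw [← hgy, Equiv.Perm.inv_apply_self]
  ext τ
  constructor
  · rintro ⟨h, ⟨hhp, hhq⟩, rfl⟩
    constructor
    · show ((g⁻¹ * h * g : alternatingGroup (Fin n)) : Equiv.Perm (Fin n)) x = x
      simp only [Subgroup.coe_mul, InvMemClass.coe_inv, Equiv.Perm.mul_apply, ← hgv]
      rw [hgx, hhp, hinvp]
    · show ((g⁻¹ * h * g : alternatingGroup (Fin n)) : Equiv.Perm (Fin n)) y = y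
      simp only [Subgroup.coe_mul, InvMemClass.coe_inv, Equiv.Perm.mul_apply, ← hgv]
      rw [hgy, hhq, hinvq]
  · rintro ⟨hτx, hτy⟩
    refine ⟨g * τ * g⁻¹, ⟨?_, ?_⟩, by simp [conjSet]; group⟩
    · show ((g * τ * g⁻¹ : alternatingGroup (Fin n)) : Equiv.Perm (Fin n)) p = p
      simp only [Subgroup.coe_mul, InvMemClass.coe_inv, Equiv.Perm.mul_apply, ← hgv]
      rw [hinvp, hτx, hgx]
    · show ((g * τ * g⁻¹ : alternatingGroup (Fin n)) : Equiv.Perm (Fin n)) q = q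
      simp only [Subgroup.coe_mul, InvMemClass.coe_inv, Equiv.Perm.mul_apply, ← hgv]
      rw [hinvq, hτy, hgy]

end AuxAlternating

set_option maxHeartbeats 1000000 in
/-- For `n ≥ 7`, `A_n` is a product of 9 conjugates of the pointwise
stabilizer of the last two points (a copy of `A_{n-2}`). -/
theorem alternating_eq_prod_nine_conjugates_two_point_stabilizer (n : ℕ)
    (hn : 7 ≤ n) (p q : Fin n) (hp : (p : ℕ) = n - 1) (hq : (q : ℕ) = n - 2) :
    ∃ g : Fin 9 → alternatingGroup (Fin n),
      (List.ofFn fun i => conjSet (g i)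
        {σ : alternatingGroup (Fin n) |
          (σ : Equiv.Perm (Fin n)) p = p ∧ (σ : Equiv.Perm (Fin n)) q = q}).prod =
      (Set.univ : Set (alternatingGroup (Fin n))) := by
  have hpq : p ≠ q := by
    intro h
    rw [h] at hp
    omega
  set a : Fin n := ⟨0, by omega⟩ with ha
  set b : Fin n := ⟨1, by omega⟩ with hb
  set c : Fin n := ⟨2, by omega⟩ with hc
  set d : Fin n := ⟨3, by omega⟩ with hd
  have hab : a ≠ b := by simp [ha, hb, Fin.ext_iff]
  have hac : a ≠ c := by simp [ha, hc, Fin.ext_iff]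
  have had : a ≠ d := by simp [ha, hd, Fin.ext_iff]
  have hbc : b ≠ c := by simp [hb, hc, Fin.ext_iff]
  have hbd : b ≠ d := by simp [hb, hd, Fin.ext_iff]
  have hcd : c ≠ d := by simp [hc, hd, Fin.ext_iff]
  have key : ∀ x y : Fin n, x ≠ y → ∃ g : alternatingGroup (Fin n),
      (g : Equiv.Perm (Fin n)) x = p ∧ (g : Equiv.Perm (Fin n)) y = q := by
    intro x y hxy
    obtain ⟨gv, hm, h1, h2⟩ := exists_map2 hn x y p q hxy hpq
    exact ⟨⟨gv, hm⟩, h1, h2⟩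
  obtain ⟨g1, hg1x, hg1y⟩ := key a c hac
  obtain ⟨g2, hg2x, hg2y⟩ := key a d had
  obtain ⟨g3, hg3x, hg3y⟩ := key b c hbc
  obtain ⟨g4, hg4x, hg4y⟩ := key b d hbd
  refine ⟨![g1, g2, g1, g3, g4, g3, g1, g2, g1], ?_⟩
  set H : Set (alternatingGroup (Fin n)) :=
    {σ : alternatingGroup (Fin n) |
      (σ : Equiv.Perm (Fin n)) p = p ∧ (σ : Equiv.Perm (Fin n)) q = q} with hH
  have e1 : conjSet g1 H = Hs n a c := conj_eq p q a c g1 hg1x hg1y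
  have e2 : conjSet g2 H = Hs n a d := conj_eq p q a d g2 hg2x hg2y
  have e3 : conjSet g3 H = Hs n b c := conj_eq p q b c g3 hg3x hg3y
  have e4 : conjSet g4 H = Hs n b d := conj_eq p q b d g4 hg4x hg4y
  have hlist : (List.ofFn fun i => conjSet (![g1, g2, g1, g3, g4, g3, g1, g2, g1] i) H) =
      [Hs n a c, Hs n a d, Hs n a c, Hs n b c, Hs n b d, Hs n b c,
       Hs n a c, Hs n a d, Hs n a c] := by
    simp [List.ofFn_succ, e1, e2, e3, e4]
  rw [hlist]
  apply Set.eq_univ_of_univ_subset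
  intro σ _
  obtain ⟨uv, ⟨u, hu, v, hv, huv⟩, w, hw, hσ⟩ := top_mem hn a b hab σ
  have hu3 := triple_mem hn a c d had hcd u hu
  have hv3 := triple_mem hn b c d hbd hcd v hv
  have hw3 := triple_mem hn a c d had hcd w hw
  have hmem : σ ∈ (Hs n a c * Hs n a d * Hs n a c) * (Hs n b c * Hs n b d * Hs n b c) *
      (Hs n a c * Hs n a d * Hs n a c) := by
    rw [← hσ, ← huv]
    exact Set.mul_mem_mul (Set.mul_mem_mul hu3 hv3) hw3
  simpa [List.prod_cons, mul_assoc] using hmem
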